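/- Let Ξ = (ξ_{ij}) be an n×n random symmetric matrix with zero diagonal whose above-diagonal entries are independent centered random variables uniformly bounded by √h. Let r > 0 and let E be the event that ‖row_i(Ξ)‖₂² ≤ r for all i ∈ [n], assumed to have positive probability. Let S be a set of pairwise disjoint unordered pairs of indices, and let E_S be the event that for every {i,j} ∈ S, max(‖row_i(Ξ)‖₂², ‖row_j(Ξ)‖₂²) ≥ r + ξ_{ij}² − h. Then for any multiset E' of unordered pairs containing S such that every element of S has multiplicity one in E', we have E[∏_{{i,j}∈E'} ξ_{ij} · 1_E] = E[∏_{{i,j}∈E'} ξ_{ij} · 1_{E_S ∩ E}]. -/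

import Mathlib

open MeasureTheory ProbabilityTheory


section Aux
variable {n : ℕ}
abbrev IdxP (n : ℕ) := {pr : Fin n × Fin n // pr.1 < pr.2}
noncomputable def entf (e0 : IdxP n) (x : ({e0}ᶜ : Finset (IdxP n)) → ℝ) (k l : Fin n) : ℝ :=
  if hkl : k < l then
    (if hm : (⟨(k, l), hkl⟩ : IdxP n) ∈ ({e0}ᶜ : Finset (IdxP n)) then x ⟨⟨(k, l), hkl⟩, hm⟩ else 0)
  else if hlk : l < k then
    (if hm : (⟨(l, k), hlk⟩ : IdxP n) ∈ ({e0}ᶜ : Finset (IdxP n)) then x ⟨⟨(l, k), hlk⟩, hm⟩ else 0)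
  else 0

lemma entf_measurable (e0 : IdxP n) (k l : Fin n) :
    Measurable fun x : ({e0}ᶜ : Finset (IdxP n)) → ℝ => entf e0 x k l := by
  unfold entf
  split_ifs <;>
    first
      | exact measurable_const
      | exact measurable_pi_apply _

lemma entf_eval (e0 : IdxP n) (M : Fin n → Fin n → ℝ)
    (hsym : ∀ k l, M k l = M l k) (hdiag : ∀ k, M k k = 0) (k l : Fin n) :
    entf e0 (fun e => M e.1.1.1 e.1.1.2) k l
      = if (k, l) = e0.1 ∨ (l, k) = e0.1 then 0 else M k l := by
  have he0 : e0.1.1 < e0.1.2 := e0.2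
  unfold entf
  rcases lt_trichotomy k l with hkl | hkl | hkl
  · rw [dif_pos hkl]
    by_cases hc : (k, l) = e0.1
    · have : ¬ ((⟨(k, l), hkl⟩ : IdxP n) ∈ ({e0}ᶜ : Finset (IdxP n))) := by
        simp [Finset.mem_compl, Subtype.ext_iff, hc]
      rw [dif_neg this, if_pos (Or.inl hc)]
    · have hc2 : ¬ ((l, k) = e0.1) := by
        intro hh
        rw [← hh] at he0
        exact absurd hkl (lt_asymm he0)
      have : (⟨(k, l), hkl⟩ : IdxP n) ∈ ({e0}ᶜ : Finset (IdxP n)) := by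
        simp [Finset.mem_compl, Subtype.ext_iff, hc]
      rw [dif_pos this, if_neg (by tauto)]
  · subst hkl
    rw [dif_neg (lt_irrefl k), dif_neg (lt_irrefl k)]
    have hc : ¬ ((k, k) = e0.1) := by
      intro hh; rw [← hh] at he0; exact lt_irrefl _ he0
    rw [if_neg (by tauto), hdiag]
  · rw [dif_neg (lt_asymm hkl), dif_pos hkl]
    by_cases hc : (l, k) = e0.1
    · have : ¬ ((⟨(l, k), hkl⟩ : IdxP n) ∈ ({e0}ᶜ : Finset (IdxP n))) := by
        simp [Finset.mem_compl, Subtype.ext_iff, hc]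
      rw [dif_neg this, if_pos (Or.inr hc)]
    · have hc2 : ¬ ((k, l) = e0.1) := by
        intro hh
        rw [← hh] at he0
        exact absurd hkl (lt_asymm he0)
      have : (⟨(l, k), hkl⟩ : IdxP n) ∈ ({e0}ᶜ : Finset (IdxP n)) := by
        simp [Finset.mem_compl, Subtype.ext_iff, hc]
      rw [dif_pos this, if_neg (by tauto), hsym]

lemma multiset_prod_abs_le {α : Type*} (m : Multiset α) (f : α → ℝ) {C : ℝ} (hC : 0 ≤ C)
    (hf : ∀ a ∈ m, |f a| ≤ C) : |(m.map f).prod| ≤ C ^ (Multiset.card m) := by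
  induction m using Multiset.induction_on with
  | empty => simp
  | cons a s ih =>
    simp only [Multiset.map_cons, Multiset.prod_cons, Multiset.card_cons, abs_mul, pow_succ']
    exact mul_le_mul (hf a (Multiset.mem_cons_self a s))
      (ih fun b hb => hf b (Multiset.mem_cons_of_mem hb)) (abs_nonneg _) hC

lemma multiset_prod_measurable {Ω : Type*} [MeasurableSpace Ω] {α : Type*}
    (m : Multiset α) (f : α → Ω → ℝ) (hf : ∀ a, Measurable (f a)) :
    Measurable fun ω => (m.map (fun a => f a ω)).prod := by
  induction m using Multiset.induction_on with
  | empty => simp only [Multiset.map_zero, Multiset.prod_zero]; exact measurable_const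
  | cons a s ih =>
    simp only [Multiset.map_cons, Multiset.prod_cons]
    exact (hf a).mul ih

end Aux

lemma key_zero {Ω : Type*} [MeasureSpace Ω] [IsProbabilityMeasure (ℙ : Measure Ω)]
    (n : ℕ) (h : ℝ) (hh : 0 ≤ h)
    (Ξ : Ω → Matrix (Fin n) (Fin n) ℝ)
    (hmeas : ∀ i j, Measurable fun ω => Ξ ω i j)
    (hsym : ∀ ω i j, Ξ ω i j = Ξ ω j i)
    (hdiag : ∀ ω i, Ξ ω i i = 0)
    (hbdd : ∀ ω i j, |Ξ ω i j| ≤ Real.sqrt h)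
    (hcent : ∀ i j : Fin n, i ≠ j → ∫ ω, Ξ ω i j = 0)
    (hindep : iIndepFun
      (fun (e : IdxP n) => fun ω => Ξ ω e.1.1 e.1.2) ℙ)
    (r : ℝ)
    (T : Finset (Fin n × Fin n)) (hTlt : ∀ pr ∈ T, pr.1 < pr.2)
    (pr0 : Fin n × Fin n) (hij : pr0.1 < pr0.2)
    (hTd : ∀ pr ∈ T, pr.1 ≠ pr0.1 ∧ pr.1 ≠ pr0.2 ∧ pr.2 ≠ pr0.1 ∧ pr.2 ≠ pr0.2)
    (E' : Multiset (Fin n × Fin n))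
    (hE'lt : ∀ pr ∈ E', pr.1 < pr.2)
    (hcount : E'.count pr0 = 1) :
    ∫ ω in (({ω | ∀ pr ∈ T, r + (Ξ ω pr.1 pr.2) ^ 2 - h
            ≤ max (∑ j, (Ξ ω pr.1 j) ^ 2) (∑ j, (Ξ ω pr.2 j) ^ 2)}
        ∩ {ω | ∀ i, (∑ j, (Ξ ω i j) ^ 2) ≤ r})
        \ {ω | r + (Ξ ω pr0.1 pr0.2) ^ 2 - h
            ≤ max (∑ j, (Ξ ω pr0.1 j) ^ 2) (∑ j, (Ξ ω pr0.2 j) ^ 2)}),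
      (E'.map (fun pr => Ξ ω pr.1 pr.2)).prod ∂ℙ = 0 := by
  classical
  set e0 : IdxP n := ⟨pr0, hij⟩ with he0def
  set coords : Ω → (({e0}ᶜ : Finset (IdxP n)) → ℝ) :=
    fun ω e => Ξ ω e.1.1.1 e.1.1.2 with hcoordsdef
  have hcoords_meas : Measurable coords :=
    measurable_pi_lambda _ fun e => hmeas _ _
  have hentc : ∀ (ω : Ω) (k l : Fin n),
      entf e0 (coords ω) k l = if (k, l) = pr0 ∨ (l, k) = pr0 then 0 else Ξ ω k l :=
    fun ω k l => entf_eval e0 (Ξ ω) (hsym ω) (hdiag ω) k l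
  have hxi2 : ∀ ω, (Ξ ω pr0.1 pr0.2) ^ 2 ≤ h := by
    intro ω
    calc (Ξ ω pr0.1 pr0.2) ^ 2 = |Ξ ω pr0.1 pr0.2| ^ 2 := (sq_abs _).symm
      _ ≤ (Real.sqrt h) ^ 2 := by
          exact pow_le_pow_left₀ (abs_nonneg _) (hbdd ω pr0.1 pr0.2) 2
      _ = h := Real.sq_sqrt hh
  -- row sum identities
  have hrow_other : ∀ (ω : Ω) (k : Fin n), k ≠ pr0.1 → k ≠ pr0.2 →
      (∑ l, (entf e0 (coords ω) k l) ^ 2) = ∑ l, (Ξ ω k l) ^ 2 := by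
    intro ω k h1 h2
    refine Finset.sum_congr rfl fun l _ => ?_
    rw [hentc, if_neg]
    rintro (hc | hc)
    · exact h1 (by rw [← hc])
    · exact h2 (by rw [← hc])
  have hrow_i : ∀ ω : Ω,
      (∑ l, (entf e0 (coords ω) pr0.1 l) ^ 2) = (∑ l, (Ξ ω pr0.1 l) ^ 2) - (Ξ ω pr0.1 pr0.2) ^ 2 := by
    intro ω
    have hterm : ∀ l, (entf e0 (coords ω) pr0.1 l) ^ 2
        = (Ξ ω pr0.1 l) ^ 2 - (if l = pr0.2 then (Ξ ω pr0.1 pr0.2) ^ 2 else 0) := by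
      intro l
      rw [hentc]
      by_cases hl : l = pr0.2
      · subst hl
        rw [if_pos (Or.inl rfl), if_pos rfl]
        ring
      · rw [if_neg, if_neg hl]
        · ring
        rintro (hc | hc)
        · exact hl (congrArg Prod.snd hc)
        · exact (ne_of_lt hij) (congrArg Prod.snd hc)
    rw [Finset.sum_congr rfl fun l _ => hterm l, Finset.sum_sub_distrib]
    simp
  have hrow_j : ∀ ω : Ω,
      (∑ l, (entf e0 (coords ω) pr0.2 l) ^ 2) = (∑ l, (Ξ ω pr0.2 l) ^ 2) - (Ξ ω pr0.1 pr0.2) ^ 2 := by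
    intro ω
    have hterm : ∀ l, (entf e0 (coords ω) pr0.2 l) ^ 2
        = (Ξ ω pr0.2 l) ^ 2 - (if l = pr0.1 then (Ξ ω pr0.1 pr0.2) ^ 2 else 0) := by
      intro l
      rw [hentc]
      by_cases hl : l = pr0.1
      · subst hl
        rw [if_pos (Or.inr rfl), if_pos rfl, hsym ω pr0.2 pr0.1]
        ring
      · rw [if_neg, if_neg hl]
        · ring
        rintro (hc | hc)
        · exact (ne_of_lt hij) (congrArg Prod.fst hc).symm
        · exact hl (congrArg Prod.fst hc)
    rw [Finset.sum_congr rfl fun l _ => hterm l, Finset.sum_sub_distrib]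
    simp
  have hent_pair : ∀ (ω : Ω) (pr : Fin n × Fin n), pr.1 < pr.2 → pr ≠ pr0 →
      entf e0 (coords ω) pr.1 pr.2 = Ξ ω pr.1 pr.2 := by
    intro ω pr hlt hne
    rw [hentc, if_neg]
    rintro (hc | hc)
    · exact hne (by rw [← hc])
    · rw [← hc] at hij
      exact absurd hlt (lt_asymm hij)
  -- the C set in coordinate space
  set Cset : Set (({e0}ᶜ : Finset (IdxP n)) → ℝ) :=
    {x | (∀ k, k ≠ pr0.1 → k ≠ pr0.2 → (∑ l, (entf e0 x k l) ^ 2) ≤ r) ∧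
         (∀ pr ∈ T, r + (entf e0 x pr.1 pr.2) ^ 2 - h
            ≤ max (∑ l, (entf e0 x pr.1 l) ^ 2) (∑ l, (entf e0 x pr.2 l) ^ 2)) ∧
         max (∑ l, (entf e0 x pr0.1 l) ^ 2) (∑ l, (entf e0 x pr0.2 l) ^ 2) < r - h} with hCsetdef
  have hfm : ∀ k, Measurable fun x : ({e0}ᶜ : Finset (IdxP n)) → ℝ =>
      ∑ l, (entf e0 x k l) ^ 2 :=
    fun k => Finset.measurable_sum _ fun l _ => ((entf_measurable e0 k l).pow_const 2)
  have hCm : MeasurableSet Cset := by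
    have h1 : MeasurableSet {x : ({e0}ᶜ : Finset (IdxP n)) → ℝ |
        ∀ k, k ≠ pr0.1 → k ≠ pr0.2 → (∑ l, (entf e0 x k l) ^ 2) ≤ r} := by
      have : {x : ({e0}ᶜ : Finset (IdxP n)) → ℝ |
          ∀ k, k ≠ pr0.1 → k ≠ pr0.2 → (∑ l, (entf e0 x k l) ^ 2) ≤ r}
          = ⋂ k, ⋂ (_ : k ≠ pr0.1), ⋂ (_ : k ≠ pr0.2),
              {x | (∑ l, (entf e0 x k l) ^ 2) ≤ r} := by
        ext x; simp
      rw [this]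
      exact MeasurableSet.iInter fun k => MeasurableSet.iInter fun _ =>
        MeasurableSet.iInter fun _ => measurableSet_le (hfm k) measurable_const
    have h2 : MeasurableSet {x : ({e0}ᶜ : Finset (IdxP n)) → ℝ |
        ∀ pr ∈ T, r + (entf e0 x pr.1 pr.2) ^ 2 - h
          ≤ max (∑ l, (entf e0 x pr.1 l) ^ 2) (∑ l, (entf e0 x pr.2 l) ^ 2)} := by
      have : {x : ({e0}ᶜ : Finset (IdxP n)) → ℝ |
          ∀ pr ∈ T, r + (entf e0 x pr.1 pr.2) ^ 2 - h
            ≤ max (∑ l, (entf e0 x pr.1 l) ^ 2) (∑ l, (entf e0 x pr.2 l) ^ 2)}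
          = ⋂ pr, ⋂ (_ : pr ∈ T), {x | r + (entf e0 x pr.1 pr.2) ^ 2 - h
            ≤ max (∑ l, (entf e0 x pr.1 l) ^ 2) (∑ l, (entf e0 x pr.2 l) ^ 2)} := by
        ext x; simp
      rw [this]
      exact MeasurableSet.iInter fun pr => MeasurableSet.iInter fun _ =>
        measurableSet_le
          ((measurable_const.add ((entf_measurable e0 pr.1 pr.2).pow_const 2)).sub
            measurable_const)
          ((hfm pr.1).max (hfm pr.2))
    have h3 : MeasurableSet {x : ({e0}ᶜ : Finset (IdxP n)) → ℝ |
        max (∑ l, (entf e0 x pr0.1 l) ^ 2) (∑ l, (entf e0 x pr0.2 l) ^ 2) < r - h} :=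
      measurableSet_lt ((hfm pr0.1).max (hfm pr0.2)) measurable_const
    rw [hCsetdef, Set.setOf_and, Set.setOf_and]
    exact h1.inter (h2.inter h3)
  set g : (({e0}ᶜ : Finset (IdxP n)) → ℝ) → ℝ :=
    Set.indicator Cset (fun x => ((E'.erase pr0).map (fun pr => entf e0 x pr.1 pr.2)).prod)
    with hgdef
  have hg_meas : Measurable g :=
    Measurable.indicator
      (multiset_prod_measurable (E'.erase pr0) (fun pr x => entf e0 x pr.1 pr.2)
        (fun pr => entf_measurable e0 pr.1 pr.2)) hCm
  -- the big set
  set BigSet : Set Ω :=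
    (({ω | ∀ pr ∈ T, r + (Ξ ω pr.1 pr.2) ^ 2 - h
            ≤ max (∑ j, (Ξ ω pr.1 j) ^ 2) (∑ j, (Ξ ω pr.2 j) ^ 2)}
        ∩ {ω | ∀ i, (∑ j, (Ξ ω i j) ^ 2) ≤ r})
        \ {ω | r + (Ξ ω pr0.1 pr0.2) ^ 2 - h
            ≤ max (∑ j, (Ξ ω pr0.1 j) ^ 2) (∑ j, (Ξ ω pr0.2 j) ^ 2)}) with hBigdef
  have hsum_meas : ∀ k, Measurable fun ω => ∑ l, (Ξ ω k l) ^ 2 :=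
    fun k => Finset.measurable_sum _ fun l _ => (hmeas k l).pow_const 2
  have hBigm : MeasurableSet BigSet := by
    have h1 : MeasurableSet {ω : Ω | ∀ pr ∈ T, r + (Ξ ω pr.1 pr.2) ^ 2 - h
        ≤ max (∑ j, (Ξ ω pr.1 j) ^ 2) (∑ j, (Ξ ω pr.2 j) ^ 2)} := by
      have : {ω : Ω | ∀ pr ∈ T, r + (Ξ ω pr.1 pr.2) ^ 2 - h
          ≤ max (∑ j, (Ξ ω pr.1 j) ^ 2) (∑ j, (Ξ ω pr.2 j) ^ 2)}
          = ⋂ pr, ⋂ (_ : pr ∈ T), {ω | r + (Ξ ω pr.1 pr.2) ^ 2 - h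
            ≤ max (∑ j, (Ξ ω pr.1 j) ^ 2) (∑ j, (Ξ ω pr.2 j) ^ 2)} := by
        ext ω; simp
      rw [this]
      exact MeasurableSet.iInter fun pr => MeasurableSet.iInter fun _ =>
        measurableSet_le
          ((measurable_const.add ((hmeas pr.1 pr.2).pow_const 2)).sub measurable_const)
          ((hsum_meas pr.1).max (hsum_meas pr.2))
    have h2 : MeasurableSet {ω : Ω | ∀ i, (∑ j, (Ξ ω i j) ^ 2) ≤ r} := by
      have : {ω : Ω | ∀ i, (∑ j, (Ξ ω i j) ^ 2) ≤ r}
          = ⋂ i, {ω | (∑ j, (Ξ ω i j) ^ 2) ≤ r} := by ext ω; simp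
      rw [this]
      exact MeasurableSet.iInter fun i => measurableSet_le (hsum_meas i) measurable_const
    have h3 : MeasurableSet {ω : Ω | r + (Ξ ω pr0.1 pr0.2) ^ 2 - h
        ≤ max (∑ j, (Ξ ω pr0.1 j) ^ 2) (∑ j, (Ξ ω pr0.2 j) ^ 2)} :=
      measurableSet_le
        ((measurable_const.add ((hmeas pr0.1 pr0.2).pow_const 2)).sub measurable_const)
        ((hsum_meas pr0.1).max (hsum_meas pr0.2))
    exact (h1.inter h2).diff h3
  -- equivalence of events
  have hBmem : ∀ ω, ω ∈ BigSet ↔ coords ω ∈ Cset := by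
    intro ω
    rw [hBigdef, hCsetdef]
    simp only [Set.mem_diff, Set.mem_inter_iff, Set.mem_setOf_eq, not_le]
    constructor
    · rintro ⟨⟨hT, hE⟩, hA0⟩
      have hRi : (∑ j, (Ξ ω pr0.1 j) ^ 2) < r + (Ξ ω pr0.1 pr0.2) ^ 2 - h :=
        lt_of_le_of_lt (le_max_left _ _) hA0
      have hRj : (∑ j, (Ξ ω pr0.2 j) ^ 2) < r + (Ξ ω pr0.1 pr0.2) ^ 2 - h :=
        lt_of_le_of_lt (le_max_right _ _) hA0
      refine ⟨?_, ?_, ?_⟩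
      · intro k h1 h2
        rw [hrow_other ω k h1 h2]
        exact hE k
      · intro pr hpr
        obtain ⟨d1, d2, d3, d4⟩ := hTd pr hpr
        have hne : pr ≠ pr0 := fun hc => d1 (by rw [hc])
        rw [hent_pair ω pr (hTlt pr hpr) hne, hrow_other ω pr.1 d1 d2,
          hrow_other ω pr.2 d3 d4]
        exact hT pr hpr
      · rw [hrow_i ω, hrow_j ω]
        exact max_lt (by linarith) (by linarith)
    · rintro ⟨C1, C2, C3⟩
      rw [hrow_i ω, hrow_j ω] at C3
      have hmi : (∑ j, (Ξ ω pr0.1 j) ^ 2) - (Ξ ω pr0.1 pr0.2) ^ 2 < r - h :=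
        lt_of_le_of_lt (le_max_left _ _) C3
      have hmj : (∑ j, (Ξ ω pr0.2 j) ^ 2) - (Ξ ω pr0.1 pr0.2) ^ 2 < r - h :=
        lt_of_le_of_lt (le_max_right _ _) C3
      have hx2 := hxi2 ω
      refine ⟨⟨?_, ?_⟩, ?_⟩
      · intro pr hpr
        obtain ⟨d1, d2, d3, d4⟩ := hTd pr hpr
        have hne : pr ≠ pr0 := fun hc => d1 (by rw [hc])
        have := C2 pr hpr
        rwa [hent_pair ω pr (hTlt pr hpr) hne, hrow_other ω pr.1 d1 d2,
          hrow_other ω pr.2 d3 d4] at this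
      · intro k
        by_cases h1 : k = pr0.1
        · subst h1; linarith
        by_cases h2 : k = pr0.2
        · subst h2; linarith
        have := C1 k h1 h2
        rwa [hrow_other ω k h1 h2] at this
      · exact max_lt (by linarith) (by linarith)
  -- product identity
  have hpr0E' : pr0 ∈ E' := by
    rw [← Multiset.count_pos, hcount]; norm_num
  have hpr0notE : pr0 ∉ E'.erase pr0 := by
    rw [← Multiset.count_eq_zero, Multiset.count_erase_self, hcount]
  have hprod : ∀ ω, (E'.map (fun pr => Ξ ω pr.1 pr.2)).prod
      = Ξ ω pr0.1 pr0.2 * ((E'.erase pr0).map (fun pr => Ξ ω pr.1 pr.2)).prod := by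
    intro ω
    conv_lhs => rw [← Multiset.cons_erase hpr0E']
    rw [Multiset.map_cons, Multiset.prod_cons]
  have hprod2 : ∀ ω, ((E'.erase pr0).map (fun pr => entf e0 (coords ω) pr.1 pr.2)).prod
      = ((E'.erase pr0).map (fun pr => Ξ ω pr.1 pr.2)).prod := by
    intro ω
    refine congrArg Multiset.prod (Multiset.map_congr rfl fun pr hpr => ?_)
    have hmem : pr ∈ E' := Multiset.mem_of_mem_erase hpr
    have hne : pr ≠ pr0 := fun hc => hpr0notE (hc ▸ hpr)
    exact hent_pair ω pr (hE'lt pr hmem) hne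
  -- indicator identity
  have hkey : ∀ ω, Set.indicator BigSet (fun ω => (E'.map (fun pr => Ξ ω pr.1 pr.2)).prod) ω
      = Ξ ω pr0.1 pr0.2 * g (coords ω) := by
    intro ω
    by_cases hω : ω ∈ BigSet
    · have hc : coords ω ∈ Cset := (hBmem ω).mp hω
      rw [Set.indicator_of_mem hω, hprod ω, hgdef, Set.indicator_of_mem hc, hprod2 ω]
    · have hc : coords ω ∉ Cset := fun hc => hω ((hBmem ω).mpr hc)
      rw [Set.indicator_of_notMem hω, hgdef, Set.indicator_of_notMem hc, mul_zero]
  -- independence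
  have base := hindep.indepFun_finset {e0} ({e0}ᶜ) disjoint_compl_right (fun e => hmeas _ _)
  have hIndep : IndepFun (fun ω => Ξ ω pr0.1 pr0.2) (fun ω => g (coords ω)) ℙ := by
    exact base.comp (measurable_pi_apply (⟨e0, Finset.mem_singleton_self e0⟩ :
      ({e0} : Finset (IdxP n)))) hg_meas
  -- conclude
  rw [← integral_indicator hBigm]
  calc ∫ ω, Set.indicator BigSet (fun ω => (E'.map (fun pr => Ξ ω pr.1 pr.2)).prod) ω ∂ℙ
      = ∫ ω, Ξ ω pr0.1 pr0.2 * g (coords ω) ∂ℙ := by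
        exact integral_congr_ae (Filter.Eventually.of_forall hkey)
    _ = (∫ ω, Ξ ω pr0.1 pr0.2 ∂ℙ) * ∫ ω, g (coords ω) ∂ℙ :=
        IndepFun.integral_mul_eq_mul_integral hIndep (hmeas pr0.1 pr0.2).aestronglyMeasurable
          (hg_meas.comp hcoords_meas).aestronglyMeasurable
    _ = 0 := by rw [hcent pr0.1 pr0.2 (ne_of_lt hij), zero_mul]

/-- Let `Ξ` be an `n×n` random symmetric matrix with zero diagonal and
independent centered above-diagonal entries bounded by `√h`, and let `E` be the event that
all rows satisfy `‖row_i‖₂² ≤ r` (of positive probability). For a set `S` of pairwise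
disjoint unordered pairs and the event `E_S` that every pair `{i,j} ∈ S` has
`max(‖row_i‖₂², ‖row_j‖₂²) ≥ r + ξ_{ij}² − h`, and for any multiset `E'` of pairs containing
each element of `S` with multiplicity one, one has
`E[∏_{{i,j}∈E'} ξ_{ij} 1_E] = E[∏_{{i,j}∈E'} ξ_{ij} 1_{E_S ∩ E}]`. -/
theorem stmt_13 {Ω : Type*} [MeasureSpace Ω] [IsProbabilityMeasure (ℙ : Measure Ω)]
    (n : ℕ) (h : ℝ) (hh : 0 ≤ h)
    (Ξ : Ω → Matrix (Fin n) (Fin n) ℝ)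
    (hmeas : ∀ i j, Measurable fun ω => Ξ ω i j)
    (hsym : ∀ ω i j, Ξ ω i j = Ξ ω j i)
    (hdiag : ∀ ω i, Ξ ω i i = 0)
    (hbdd : ∀ ω i j, |Ξ ω i j| ≤ Real.sqrt h)
    (hcent : ∀ i j : Fin n, i ≠ j → ∫ ω, Ξ ω i j = 0)
    (hindep : iIndepFun
      (fun (e : {pr : Fin n × Fin n // pr.1 < pr.2}) => fun ω => Ξ ω e.1.1 e.1.2) ℙ)
    (r : ℝ) (hr : 0 < r)
    (hposE : 0 < ℙ {ω | ∀ i, (∑ j, (Ξ ω i j) ^ 2) ≤ r})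
    (S : Finset (Fin n × Fin n))
    (hSlt : ∀ pr ∈ S, pr.1 < pr.2)
    (hdisj : ∀ pr ∈ S, ∀ pr' ∈ S, pr ≠ pr' →
      pr.1 ≠ pr'.1 ∧ pr.1 ≠ pr'.2 ∧ pr.2 ≠ pr'.1 ∧ pr.2 ≠ pr'.2)
    (E' : Multiset (Fin n × Fin n))
    (hE'lt : ∀ pr ∈ E', pr.1 < pr.2)
    (hmult : ∀ pr ∈ S, E'.count pr = 1) :
    (∫ ω in {ω | ∀ i, (∑ j, (Ξ ω i j) ^ 2) ≤ r},
        (E'.map (fun pr => Ξ ω pr.1 pr.2)).prod ∂ℙ)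
      = ∫ ω in ({ω | ∀ pr ∈ S,
            r + (Ξ ω pr.1 pr.2) ^ 2 - h
              ≤ max (∑ j, (Ξ ω pr.1 j) ^ 2) (∑ j, (Ξ ω pr.2 j) ^ 2)}
          ∩ {ω | ∀ i, (∑ j, (Ξ ω i j) ^ 2) ≤ r}),
          (E'.map (fun pr => Ξ ω pr.1 pr.2)).prod ∂ℙ := by
  classical
  have hPmeas : Measurable fun ω => (E'.map (fun pr => Ξ ω pr.1 pr.2)).prod :=
    multiset_prod_measurable E' (fun pr ω => Ξ ω pr.1 pr.2) (fun pr => hmeas pr.1 pr.2)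
  have hPint : Integrable (fun ω => (E'.map (fun pr => Ξ ω pr.1 pr.2)).prod) ℙ := by
    refine (integrable_const ((Real.sqrt h) ^ (Multiset.card E'))).mono'
      hPmeas.aestronglyMeasurable (Filter.Eventually.of_forall fun ω => ?_)
    simpa [Real.norm_eq_abs] using multiset_prod_abs_le E' (fun pr => Ξ ω pr.1 pr.2)
      (Real.sqrt_nonneg h) (fun pr _ => hbdd ω pr.1 pr.2)
  have hsum_meas : ∀ k, Measurable fun ω => ∑ l, (Ξ ω k l) ^ 2 :=
    fun k => Finset.measurable_sum _ fun l _ => (hmeas k l).pow_const 2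
  have hEm : MeasurableSet {ω : Ω | ∀ i, (∑ j, (Ξ ω i j) ^ 2) ≤ r} := by
    have : {ω : Ω | ∀ i, (∑ j, (Ξ ω i j) ^ 2) ≤ r}
        = ⋂ i, {ω | (∑ j, (Ξ ω i j) ^ 2) ≤ r} := by ext ω; simp
    rw [this]
    exact MeasurableSet.iInter fun i => measurableSet_le (hsum_meas i) measurable_const
  have hA0m : ∀ pr0 : Fin n × Fin n, MeasurableSet {ω : Ω | r + (Ξ ω pr0.1 pr0.2) ^ 2 - h
      ≤ max (∑ j, (Ξ ω pr0.1 j) ^ 2) (∑ j, (Ξ ω pr0.2 j) ^ 2)} := fun pr0 =>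
    measurableSet_le
      ((measurable_const.add ((hmeas pr0.1 pr0.2).pow_const 2)).sub measurable_const)
      ((hsum_meas pr0.1).max (hsum_meas pr0.2))
  have hATm : ∀ T : Finset (Fin n × Fin n), MeasurableSet {ω : Ω | ∀ pr ∈ T,
      r + (Ξ ω pr.1 pr.2) ^ 2 - h
        ≤ max (∑ j, (Ξ ω pr.1 j) ^ 2) (∑ j, (Ξ ω pr.2 j) ^ 2)} := by
    intro T
    have : {ω : Ω | ∀ pr ∈ T, r + (Ξ ω pr.1 pr.2) ^ 2 - h
        ≤ max (∑ j, (Ξ ω pr.1 j) ^ 2) (∑ j, (Ξ ω pr.2 j) ^ 2)}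
        = ⋂ pr, ⋂ (_ : pr ∈ T), {ω | r + (Ξ ω pr.1 pr.2) ^ 2 - h
          ≤ max (∑ j, (Ξ ω pr.1 j) ^ 2) (∑ j, (Ξ ω pr.2 j) ^ 2)} := by
      ext ω; simp
    rw [this]
    exact MeasurableSet.iInter fun pr => MeasurableSet.iInter fun _ => hA0m pr
  have main : ∀ T : Finset (Fin n × Fin n), T ⊆ S →
      (∫ ω in {ω | ∀ i, (∑ j, (Ξ ω i j) ^ 2) ≤ r},
          (E'.map (fun pr => Ξ ω pr.1 pr.2)).prod ∂ℙ)
        = ∫ ω in ({ω | ∀ pr ∈ T,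
              r + (Ξ ω pr.1 pr.2) ^ 2 - h
                ≤ max (∑ j, (Ξ ω pr.1 j) ^ 2) (∑ j, (Ξ ω pr.2 j) ^ 2)}
            ∩ {ω | ∀ i, (∑ j, (Ξ ω i j) ^ 2) ≤ r}),
            (E'.map (fun pr => Ξ ω pr.1 pr.2)).prod ∂ℙ := by
    intro T
    induction T using Finset.induction_on with
    | empty =>
      intro _
      have : {ω : Ω | ∀ pr ∈ (∅ : Finset (Fin n × Fin n)),
          r + (Ξ ω pr.1 pr.2) ^ 2 - h
            ≤ max (∑ j, (Ξ ω pr.1 j) ^ 2) (∑ j, (Ξ ω pr.2 j) ^ 2)} = Set.univ := by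
        ext ω; simp
      rw [this, Set.univ_inter]
    | @insert a s ha ih =>
      intro hsub
      have haS : a ∈ S := hsub (Finset.mem_insert_self _ _)
      have hsS : s ⊆ S := fun x hx => hsub (Finset.mem_insert_of_mem hx)
      rw [ih hsS]
      have hset : {ω : Ω | ∀ pr ∈ insert a s,
            r + (Ξ ω pr.1 pr.2) ^ 2 - h
              ≤ max (∑ j, (Ξ ω pr.1 j) ^ 2) (∑ j, (Ξ ω pr.2 j) ^ 2)}
          ∩ {ω | ∀ i, (∑ j, (Ξ ω i j) ^ 2) ≤ r}
          = (({ω : Ω | ∀ pr ∈ s,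
              r + (Ξ ω pr.1 pr.2) ^ 2 - h
                ≤ max (∑ j, (Ξ ω pr.1 j) ^ 2) (∑ j, (Ξ ω pr.2 j) ^ 2)}
            ∩ {ω | ∀ i, (∑ j, (Ξ ω i j) ^ 2) ≤ r})
            ∩ {ω | r + (Ξ ω a.1 a.2) ^ 2 - h
              ≤ max (∑ j, (Ξ ω a.1 j) ^ 2) (∑ j, (Ξ ω a.2 j) ^ 2)}) := by
        ext ω
        simp only [Set.mem_inter_iff, Set.mem_setOf_eq, Finset.mem_insert]
        constructor
        · rintro ⟨hall, hE⟩
          exact ⟨⟨fun pr hpr => hall pr (Or.inr hpr), hE⟩, hall a (Or.inl rfl)⟩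
        · rintro ⟨⟨hall, hE⟩, hA⟩
          refine ⟨fun pr hpr => ?_, hE⟩
          rcases hpr with hpr | hpr
          · subst hpr; exact hA
          · exact hall pr hpr
      rw [hset]
      set B : Set Ω := {ω : Ω | ∀ pr ∈ s,
            r + (Ξ ω pr.1 pr.2) ^ 2 - h
              ≤ max (∑ j, (Ξ ω pr.1 j) ^ 2) (∑ j, (Ξ ω pr.2 j) ^ 2)}
          ∩ {ω | ∀ i, (∑ j, (Ξ ω i j) ^ 2) ≤ r} with hBdef
      set C : Set Ω := {ω : Ω | r + (Ξ ω a.1 a.2) ^ 2 - h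
          ≤ max (∑ j, (Ξ ω a.1 j) ^ 2) (∑ j, (Ξ ω a.2 j) ^ 2)} with hCdef
      have hBm : MeasurableSet B := (hATm s).inter hEm
      have hCm : MeasurableSet C := hA0m a
      have hsplit : B = (B ∩ C) ∪ (B \ C) := (Set.inter_union_diff B C).symm
      have hTd : ∀ pr ∈ s, pr.1 ≠ a.1 ∧ pr.1 ≠ a.2 ∧ pr.2 ≠ a.1 ∧ pr.2 ≠ a.2 := by
        intro pr hpr
        have hne : pr ≠ a := fun hc => ha (hc ▸ hpr)
        exact hdisj pr (hsS hpr) a haS hne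
      have hzero := key_zero n h hh Ξ hmeas hsym hdiag hbdd hcent hindep r s
        (fun pr hpr => hSlt pr (hsS hpr)) a (hSlt a haS) hTd E' hE'lt (hmult a haS)
      calc ∫ ω in B, (E'.map (fun pr => Ξ ω pr.1 pr.2)).prod ∂ℙ
          = ∫ ω in (B ∩ C) ∪ (B \ C), (E'.map (fun pr => Ξ ω pr.1 pr.2)).prod ∂ℙ := by
            rw [← hsplit]
        _ = (∫ ω in B ∩ C, (E'.map (fun pr => Ξ ω pr.1 pr.2)).prod ∂ℙ)
            + ∫ ω in B \ C, (E'.map (fun pr => Ξ ω pr.1 pr.2)).prod ∂ℙ := by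
            refine setIntegral_union ?_ (hBm.diff hCm) hPint.integrableOn hPint.integrableOn
            exact disjoint_sdiff_self_right.mono_left Set.inter_subset_right
        _ = ∫ ω in B ∩ C, (E'.map (fun pr => Ξ ω pr.1 pr.2)).prod ∂ℙ := by
            rw [hzero, add_zero]
  exact main S (subset_refl S)
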